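/- arXiv:2308.01397 — 4 statements merged into one kernel-verified Lean document; each statement's English description precedes it below -/
import Mathlib

section
/- There is no n×n real symmetric matrix B and index k with 1 ≤ k ≤ n−2 such that: all order-k principal minors of B are zero, all order-(k+1) principal minors of B are positive, and all order-(k+2) principal minors of B are nonzero with at least one positive and at least one negative. (The sequence NA⁺A* is forbidden over ℝ.) -/
open ComplexOrder

open Matrix

/-- The principal minor of `B` indexed by the subset `α`. -/
noncomputable def pminor {m : Type*} [DecidableEq m] [Fintype m] {R : Type*} [CommRing R]
    (B : Matrix m m R) (α : Finset m) : R :=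
  (B.submatrix (fun i : α => (i : m)) (fun i : α => (i : m))).det

section Helpers

variable {ι : Type*} [DecidableEq ι] [Fintype ι]

/-- Workhorse: a principal minor equals the determinant over any injective enumeration. -/
lemma pminor_eq_det {R : Type*} [CommRing R] (B : Matrix ι ι R) (S : Finset ι)
    {κ : Type*} [Fintype κ] [DecidableEq κ] (f : κ → ι) (hinj : Function.Injective f)
    (himg : ∀ x, f x ∈ S) (hcard : Fintype.card κ = S.card) :
    pminor B S = (B.submatrix f f).det := by
  classical
  have hbij : Function.Bijective (fun x : κ => (⟨f x, himg x⟩ : {y // y ∈ S})) := by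
    rw [Fintype.bijective_iff_injective_and_card]
    constructor
    · intro a b hab
      apply hinj
      simpa using hab
    · simp [hcard, Fintype.card_coe]
  let e : κ ≃ {y // y ∈ S} := Equiv.ofBijective _ hbij
  have : (B.submatrix (fun i : S => (i : ι)) (fun i : S => (i : ι))).submatrix e e
      = B.submatrix f f := by
    ext a b
    simp [e, Matrix.submatrix_apply, Equiv.ofBijective]
  rw [pminor, ← Matrix.det_submatrix_equiv_self e, this]

/-- Jacobi block core. -/
lemma jacobi_blocks {α β : Type*} [Fintype α] [Fintype β] [DecidableEq α] [DecidableEq β]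
    (P : Matrix (α ⊕ β) (α ⊕ β) ℝ) (h : IsUnit P.det) :
    ((P⁻¹).toBlocks₁₁).det * P.det = (P.toBlocks₂₂).det := by
  classical
  set X := (P⁻¹).toBlocks₁₁
  set Z := (P⁻¹).toBlocks₂₁
  have hPinv : P * P⁻¹ = 1 := Matrix.mul_nonsing_inv P h
  have hP : Matrix.fromBlocks P.toBlocks₁₁ P.toBlocks₁₂ P.toBlocks₂₁ P.toBlocks₂₂ = P :=
    Matrix.fromBlocks_toBlocks P
  have hPi : Matrix.fromBlocks X (P⁻¹).toBlocks₁₂ Z (P⁻¹).toBlocks₂₂ = P⁻¹ :=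
    Matrix.fromBlocks_toBlocks P⁻¹
  set A := P.toBlocks₁₁; set Bb := P.toBlocks₁₂; set C := P.toBlocks₂₁; set D := P.toBlocks₂₂
  -- identities A*X + Bb*Z = 1, C*X + D*Z = 0
  have hmul : Matrix.fromBlocks A Bb C D * Matrix.fromBlocks X (P⁻¹).toBlocks₁₂ Z (P⁻¹).toBlocks₂₂
      = (1 : Matrix (α ⊕ β) (α ⊕ β) ℝ) := by rw [hP, hPi, hPinv]
  rw [Matrix.fromBlocks_multiply] at hmul
  have h1 : A * X + Bb * Z = 1 := by
    have := congrArg Matrix.toBlocks₁₁ hmul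
    ext i j
    have := congrFun (congrFun this i) j
    simpa [Matrix.toBlocks_fromBlocks₁₁, Matrix.toBlocks₁₁, Matrix.one_apply] using this
  have h2 : C * X + D * Z = 0 := by
    have := congrArg Matrix.toBlocks₂₁ hmul
    ext i j
    have := congrFun (congrFun this i) j
    simpa [Matrix.toBlocks_fromBlocks₂₁, Matrix.toBlocks₂₁, Matrix.one_apply] using this
  -- E := fromBlocks X 0 Z 1
  have hPE : P * Matrix.fromBlocks X 0 Z 1 = Matrix.fromBlocks 1 Bb 0 D := by
    conv_lhs => rw [← hP]
    rw [Matrix.fromBlocks_multiply]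
    rw [h1, h2]
    congr 1 <;> simp
  have hdet : P.det * (Matrix.fromBlocks X (0 : Matrix α β ℝ) Z (1 : Matrix β β ℝ)).det
      = (Matrix.fromBlocks (1 : Matrix α α ℝ) Bb (0 : Matrix β α ℝ) D).det := by
    rw [← Matrix.det_mul, hPE]
  rw [Matrix.det_fromBlocks_zero₁₂, Matrix.det_fromBlocks_zero₂₁] at hdet
  simp only [Matrix.det_one, mul_one, one_mul] at hdet
  rw [mul_comm]
  exact hdet

lemma jacobi (M : Matrix ι ι ℝ) (h : IsUnit M.det) (S : Finset ι) :
    pminor M⁻¹ S * M.det = pminor M Sᶜ := by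
  classical
  have h' : ∀ x : ι, x ∈ Sᶜ ↔ ¬ x ∈ S := fun x => Finset.mem_compl
  let e : ({x // x ∈ S} ⊕ {x // x ∈ Sᶜ}) ≃ ι :=
    (Equiv.sumCongr (Equiv.refl _) (Equiv.subtypeEquivRight h')).trans
      (Equiv.sumCompl (· ∈ S))
  set P := M.submatrix e e with hPdef
  have hPdet : P.det = M.det := Matrix.det_submatrix_equiv_self e M
  have hPinv : P⁻¹ = (M⁻¹).submatrix e e := by
    apply Matrix.inv_eq_right_inv
    rw [hPdef, Matrix.submatrix_mul_equiv, Matrix.mul_nonsing_inv M h]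
    exact Matrix.submatrix_one_equiv e
  have hblk : ((P⁻¹).toBlocks₁₁).det * P.det = (P.toBlocks₂₂).det :=
    jacobi_blocks P (by rwa [hPdet])
  have h11 : (P⁻¹).toBlocks₁₁ = (M⁻¹).submatrix (fun i : S => (i : ι)) (fun i : S => (i : ι)) := by
    ext a b
    simp [hPinv, Matrix.toBlocks₁₁, e, Equiv.sumCompl]
  have h22 : P.toBlocks₂₂ = M.submatrix (fun i : (Sᶜ : Finset ι) => (i : ι)) (fun i : (Sᶜ : Finset ι) => (i : ι)) := by
    ext a b
    simp [hPdef, Matrix.toBlocks₂₂, e, Equiv.sumCompl]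
  rw [h11, h22, hPdet] at hblk
  exact hblk


lemma emb2_inj {i j : ι} (hij : i ≠ j) : Function.Injective ![i, j] := by
  intro a b hab
  fin_cases a <;> fin_cases b <;> simp_all

lemma emb3_inj {i j l : ι} (hij : i ≠ j) (hil : i ≠ l) (hjl : j ≠ l) :
    Function.Injective ![i, j, l] := by
  intro a b hab
  fin_cases a <;> fin_cases b <;> simp_all

lemma emb4_inj {i j l s : ι} (hij : i ≠ j) (hil : i ≠ l) (his : i ≠ s) (hjl : j ≠ l)
    (hjs : j ≠ s) (hls : l ≠ s) : Function.Injective ![i, j, l, s] := by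
  intro a b hab
  fin_cases a <;> fin_cases b <;> simp_all

lemma pminor_singleton (B : Matrix ι ι ℝ) (i : ι) : pminor B {i} = B i i := by
  rw [pminor_eq_det B {i} ![i] (Function.injective_of_subsingleton _) (by simp)
    (by simp)]
  rw [Matrix.det_fin_one]; simp

lemma pminor_pair (B : Matrix ι ι ℝ) {i j : ι} (hij : i ≠ j) :
    pminor B {i, j} = B i i * B j j - B i j * B j i := by
  rw [pminor_eq_det B {i,j} ![i,j] (emb2_inj hij) (by intro x; fin_cases x <;> simp)
    (by simp [Finset.card_insert_of_notMem, hij])]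
  rw [Matrix.det_fin_two]; simp

lemma pminor_triple (B : Matrix ι ι ℝ) {i j l : ι} (hij : i ≠ j) (hil : i ≠ l) (hjl : j ≠ l) :
    pminor B {i, j, l} = B i i * B j j * B l l - B i i * B j l * B l j
      - B i j * B j i * B l l + B i j * B j l * B l i + B i l * B j i * B l j
      - B i l * B j j * B l i := by
  have hc : ({i, j, l} : Finset ι).card = 3 := by
    rw [Finset.card_insert_of_notMem (by simp [hij, hil]),
      Finset.card_insert_of_notMem (by simp [hjl])]
    rfl
  rw [pminor_eq_det B {i,j,l} ![i,j,l] (emb3_inj hij hil hjl)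
    (by intro x; fin_cases x <;> simp) (by simp [hc])]
  rw [Matrix.det_fin_three]; simp <;> ring

lemma pminor_submatrix (B : Matrix ι ι ℝ) (γ : Finset ι) (S : Finset {x // x ∈ γ}) :
    pminor (B.submatrix (fun i : γ => (i : ι)) (fun i : γ => (i : ι))) S
      = pminor B (S.map (Function.Embedding.subtype _)) := by
  rw [pminor, Matrix.submatrix_submatrix,
    pminor_eq_det B _ ((fun i : γ => (i : ι)) ∘ (fun i : S => (i : {x // x ∈ γ})))
      (Subtype.coe_injective.comp Subtype.coe_injective)
      (by intro x; simp) (by simp [Fintype.card_coe])]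

lemma adjugate_diag (M : Matrix ι ι ℝ) (i : ι) :
    M.adjugate i i
      = (M.submatrix (fun x : {y : ι // y ≠ i} => (x : ι)) (fun x : {y : ι // y ≠ i} => (x : ι))).det := by
  classical
  rw [Matrix.adjugate_apply]
  set M' := M.updateRow i (Pi.single i 1) with hM'
  let e : ({y : ι // y ≠ i} ⊕ PUnit.{1}) ≃ ι :=
    { toFun := Sum.elim Subtype.val (fun _ => i)
      invFun := fun x => if h : x = i then Sum.inr PUnit.unit else Sum.inl ⟨x, h⟩
      left_inv := by
        rintro (⟨x, hx⟩ | ⟨⟩)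
        · simp [hx]
        · simp
      right_inv := by
        intro x
        by_cases h : x = i <;> simp [h] }
  have key : M'.submatrix e e
      = Matrix.fromBlocks (M.submatrix (fun x : {y : ι // y ≠ i} => (x : ι)) (fun x : {y : ι // y ≠ i} => (x : ι)))
          (Matrix.of fun a (_ : PUnit.{1}) => M a.val i) 0 1 := by
    ext a b
    rcases a with a | a <;> rcases b with b | b
    · simp [e, hM', Matrix.updateRow_ne a.2]
    · simp [e, hM', Matrix.updateRow_ne a.2]
    · simp [e, hM', Matrix.updateRow_self, Pi.single_eq_of_ne b.2]
    · simp [e, hM', Matrix.updateRow_self, Matrix.one_apply]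
  rw [← Matrix.det_submatrix_equiv_self e M', key, Matrix.det_fromBlocks_zero₂₁]
  simp


lemma submatrix_ne_det_eq_zero {ι : Type*} [DecidableEq ι] [Fintype ι]
    (G : Matrix ι ι ℝ) (z : ι → ℝ) (hz : G.mulVec z = 0) (t : ι) (ht : z t = 0)
    (s : ι) (hs : z s ≠ 0) :
    (G.submatrix (fun x : {y : ι // y ≠ t} => (x : ι)) (fun x : {y : ι // y ≠ t} => (x : ι))).det
      = 0 := by
  classical
  apply Matrix.exists_mulVec_eq_zero_iff.mp
  have hst : s ≠ t := fun h => hs (h ▸ ht)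
  refine ⟨fun x => z x.val, ?_, ?_⟩
  · intro h
    exact hs (congrFun h ⟨s, hst⟩)
  · funext i
    simp only [Matrix.mulVec, dotProduct, Matrix.submatrix_apply, Pi.zero_apply]
    have hsub : ∑ j : {y : ι // y ≠ t}, G i.val j.val * z j.val
        = ∑ j ∈ Finset.univ.erase t, G i.val j * z j :=
      (Finset.sum_subtype (Finset.univ.erase t)
        (fun x => by simp) (fun j => G i.val j * z j)).symm
    have htot := Finset.sum_erase_add Finset.univ (fun j => G i.val j * z j) (Finset.mem_univ t)
    have hmv := congrFun hz i.val
    simp only [Matrix.mulVec, dotProduct, Pi.zero_apply] at hmv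
    calc ∑ j : {y : ι // y ≠ t}, G i.val j.val * z j.val
        = ∑ j ∈ Finset.univ.erase t, G i.val j * z j := hsub
      _ = ∑ j : ι, G i.val j * z j := by simpa [ht] using htot
      _ = 0 := hmv

lemma card_subtype_ne {ι : Type*} [DecidableEq ι] [Fintype ι] (t : ι) :
    Fintype.card {y : ι // y ≠ t} = Fintype.card ι - 1 := by
  classical
  have h := Fintype.card_subtype_compl (fun y : ι => y = t)
  simp only [Fintype.card_subtype_eq] at h
  exact h

end Helpers

-- claimJ skeleton: general setup + case n ≥ 7; cases 5,6 sorried for now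
section ClaimJ

theorem claimJ : (n : ℕ) → {ι : Type} → [inst1 : DecidableEq ι] → [inst2 : Fintype ι] →
    (M : Matrix ι ι ℝ) → Fintype.card ι = n → Mᵀ = M → 5 ≤ n →
    (∀ S : Finset ι, S.card = 2 → pminor M S < 0) →
    (∀ S : Finset ι, S.card = 3 → pminor M S = 0) → M.det = 0 := by
  intro n
  induction n using Nat.strong_induction_on with
  | _ n IH =>
    intro ι _ _ M hcard hsym h5 h2 h3
    by_contra hdet
    have hU : IsUnit M.det := isUnit_iff_ne_zero.mpr hdet
    set N := M⁻¹ with hNdef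
    have hNdet : N.det ≠ 0 := by
      rw [hNdef, Matrix.det_nonsing_inv]
      simp only [Ring.inverse_eq_inv']
      exact inv_ne_zero hdet
    have hNU : IsUnit N.det := isUnit_iff_ne_zero.mpr hNdet
    have hMN : N⁻¹ = M := Matrix.nonsing_inv_nonsing_inv M hU
    have hsymN : Nᵀ = N := by
      rw [hNdef, Matrix.transpose_nonsing_inv, hsym]
    have hME : ∀ i j : ι, M j i = M i j := by
      intro i j
      conv_lhs => rw [← hsym]
      rfl
    have hsE : ∀ i j : ι, N j i = N i j := by
      intro i j
      conv_lhs => rw [← hsymN]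
      rfl
    have jM : ∀ S : Finset ι, pminor N S * M.det = pminor M Sᶜ := fun S => jacobi M hU S
    have jN : ∀ S : Finset ι, pminor M S * N.det = pminor N Sᶜ := by
      intro S
      have h := jacobi N hNU S
      rwa [hMN] at h
    have hIH : ∀ T : Finset ι, 5 ≤ T.card → T.card < n → pminor M T = 0 := by
      intro T h5T hTn
      have hrfl : pminor M T
          = (M.submatrix (fun i : T => (i : ι)) (fun i : T => (i : ι))).det := rfl
      rw [hrfl]
      refine IH T.card hTn (M.submatrix _ _) (Fintype.card_coe T) ?_ h5T ?_ ?_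
      · ext i j
        simp only [Matrix.transpose_apply, Matrix.submatrix_apply]
        exact hME _ _
      · intro S hS
        rw [pminor_submatrix]
        exact h2 _ (by simpa using hS)
      · intro S hS
        rw [pminor_submatrix]
        exact h3 _ (by simpa using hS)
    -- three cases
    have hsplit : n = 5 ∨ n = 6 ∨ 7 ≤ n := by omega
    rcases hsplit with h5' | h6' | h7'
    · -- n = 5
      subst h5'
      have hcard5 : Fintype.card ι = 5 := hcard
      -- R1: squares
      have hR1 : ∀ i j : ι, i ≠ j → N i j * N i j = N i i * N j j := by
        intro i j hij
        have hj := jM {i, j}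
        have hc3 : (({i, j} : Finset ι)ᶜ).card = 3 := by
          rw [Finset.card_compl, hcard5, Finset.card_insert_of_notMem (by simp [hij]),
            Finset.card_singleton]
        rw [h3 _ hc3] at hj
        rcases mul_eq_zero.mp hj with h | h
        · rw [pminor_pair N hij, hsE i j] at h
          linarith
        · exact absurd h hdet
      have hdnz : ∀ i : ι, N i i ≠ 0 := by
        intro i h0
        apply hNdet
        apply Matrix.det_eq_zero_of_row_eq_zero i
        intro j
        by_cases h : i = j
        · rw [← h]; exact h0
        · have hr := hR1 i j h
          rw [h0, zero_mul] at hr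
          exact mul_self_eq_zero.mp hr
      have hoff : ∀ i j : ι, i ≠ j → N i j ≠ 0 := by
        intro i j hij h0
        have hr := hR1 i j hij
        rw [h0, mul_zero] at hr
        rcases mul_eq_zero.mp hr.symm with h | h
        · exact hdnz i h
        · exact hdnz j h
      -- R2
      have hR2 : ∀ o i j : ι, o ≠ i → o ≠ j → i ≠ j →
          N o i * N o j = -(N o o * N i j) := by
        intro o i j hoi hoj hij
        have hj := jM {o, i, j}
        have hc2 : (({o, i, j} : Finset ι)ᶜ).card = 2 := by
          rw [Finset.card_compl, hcard5, Finset.card_insert_of_notMem (by simp [hoi, hoj]),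
            Finset.card_insert_of_notMem (by simp [hij]), Finset.card_singleton]
        have hlt := h2 _ hc2
        have hne3 : pminor N {o, i, j} ≠ 0 := by
          intro h0
          rw [h0, zero_mul] at hj
          exact absurd hj.symm (ne_of_lt hlt)
        rw [pminor_triple N hoi hoj hij, hsE o i, hsE o j, hsE i j] at hne3
        have e1 := hR1 i j hij
        have e2 := hR1 o i hoi
        have e3 := hR1 o j hoj
        have hsum : N o o * N i i * N j j - N o o * N i j * N i j - N o i * N o i * N j j
            + N o i * N i j * N o j + N o j * N o i * N i j - N o j * N i i * N o j
            = 2 * (N o i * N o j * N i j) - 2 * (N o o * N i i * N j j) := by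
          linear_combination (-(N o o)) * e1 + (-(N j j)) * e2 + (-(N i i)) * e3
        rw [hsum] at hne3
        have hXneY : N o i * N o j * N i j ≠ N o o * N i i * N j j := by
          intro h; rw [h] at hne3; simp at hne3
        have hsq : (N o i * N o j * N i j - N o o * N i i * N j j)
            * (N o i * N o j * N i j + N o o * N i i * N j j) = 0 := by
          linear_combination (N o j * N o j * N i j * N i j) * e2
            + (N o o * N i i * N i j * N i j) * e3
            + (N o o * N i i * N o o * N j j) * e1
        rcases mul_eq_zero.mp hsq with h | h
        · exact absurd (by linarith : N o i * N o j * N i j = N o o * N i i * N j j) hXneY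
        · have hz : N i j ≠ 0 := hoff i j hij
          have hfac : N i j * (N o i * N o j + N o o * N i j) = 0 := by
            linear_combination h + (N o o) * e1
          rcases mul_eq_zero.mp hfac with h' | h'
          · exact absurd h' hz
          · linarith
      -- enumeration
      obtain ⟨o, c, d, a, b, hall, hoc, hod, hoa, hob, hcd, hca, hcb, hda, hdb, hab⟩ :
          ∃ o c d a b : ι, (∀ x : ι, x = o ∨ x = c ∨ x = d ∨ x = a ∨ x = b) ∧
            o ≠ c ∧ o ≠ d ∧ o ≠ a ∧ o ≠ b ∧ c ≠ d ∧ c ≠ a ∧ c ≠ b ∧ d ≠ a ∧ d ≠ b ∧ a ≠ b := by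
        obtain ⟨σ'⟩ : Nonempty (Fin 5 ≃ ι) := ⟨(Fintype.equivFinOfCardEq hcard5).symm⟩
        refine ⟨σ' 0, σ' 1, σ' 2, σ' 3, σ' 4, ?_, ?_, ?_, ?_, ?_, ?_, ?_, ?_, ?_, ?_, ?_⟩
        · intro x
          obtain ⟨i, rfl⟩ := σ'.surjective x
          fin_cases i
          · exact Or.inl rfl
          · exact Or.inr (Or.inl rfl)
          · exact Or.inr (Or.inr (Or.inl rfl))
          · exact Or.inr (Or.inr (Or.inr (Or.inl rfl)))
          · exact Or.inr (Or.inr (Or.inr (Or.inr rfl)))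
        all_goals exact fun h => absurd (σ'.injective h) (by decide)
      -- the weight vector and sign matrix
      set w : ι → ℝ := fun i => if i = o then -(N o o) else N i o with hwdef
      set K : Matrix ι ι ℝ := (2:ℝ) • ((1 : Matrix ι ι ℝ)
        + Matrix.replicateCol Unit (fun _ => (-(2⁻¹:ℝ))) * Matrix.replicateRow Unit (fun _ => (1:ℝ))) with hKdef
      have hKe : ∀ i j : ι, K i j = if i = j then 1 else -1 := by
        intro i j
        rw [hKdef]
        simp only [Matrix.smul_apply, Matrix.add_apply, Matrix.one_apply, Matrix.mul_apply,
          Matrix.replicateCol_apply, Matrix.replicateRow_apply, Finset.univ_unique, Finset.sum_singleton,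
          smul_eq_mul]
        split_ifs <;> norm_num
      have hfact : (N o o) • N = Matrix.diagonal w * K * Matrix.diagonal w := by
        ext i j
        rw [Matrix.mul_diagonal, Matrix.diagonal_mul, hKe, Matrix.smul_apply, smul_eq_mul]
        by_cases hij : i = j
        · subst hij
          rw [if_pos rfl]
          by_cases hio : i = o
          · rw [hio, hwdef]; simp
          · have hwi : w i = N i o := by rw [hwdef]; simp [hio]
            rw [hwi]
            linarith [hR1 i o hio]
        · rw [if_neg hij]
          by_cases hio : i = o
          · have hjo : j ≠ o := fun h => hij (hio.trans h.symm)
            have hwj : w j = N j o := by rw [hwdef]; simp [hjo]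
            have hwo : w i = -(N o o) := by rw [hwdef]; simp [hio]
            rw [hwj, hwo, hio, hsE o j]
            ring
          · by_cases hjo : j = o
            · have hwi : w i = N i o := by rw [hwdef]; simp [hio]
              have hwo : w j = -(N o o) := by rw [hwdef]; simp [hjo]
              rw [hwi, hwo, hjo, hsE o i]
              ring
            · have hwi : w i = N i o := by rw [hwdef]; simp [hio]
              have hwj : w j = N j o := by rw [hwdef]; simp [hjo]
              rw [hwi, hwj, hsE o i, hsE o j]
              have := hR2 o i j (Ne.symm hio) (Ne.symm hjo) hij
              linarith
      -- determinants
      have hdetK : K.det = -48 := by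
        rw [hKdef, Matrix.det_smul, Matrix.det_one_add_replicateCol_mul_replicateRow, hcard5]
        simp only [dotProduct, Finset.sum_const, Finset.card_univ, hcard5,
          nsmul_eq_mul, one_mul]
        norm_num
      have hdetfact : (N o o)^5 * N.det = (∏ i, w i)^2 * (-48) := by
        have h1 : ((N o o) • N).det = (N o o)^5 * N.det := by
          rw [Matrix.det_smul, hcard5]
        have h2' : (Matrix.diagonal w * K * Matrix.diagonal w).det
            = (∏ i, w i)^2 * K.det := by
          rw [Matrix.det_mul, Matrix.det_mul, Matrix.det_diagonal]
          ring
        rw [← h1, hfact, h2', hdetK]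
      set Q : ℝ := ∏ i ∈ Finset.univ.erase o, N i i with hQdef
      have hprodw : ∏ i, w i = -(N o o) * ∏ i ∈ Finset.univ.erase o, N i o := by
        rw [← Finset.mul_prod_erase Finset.univ w (Finset.mem_univ o)]
        congr 1
        · rw [hwdef]; simp
        · exact Finset.prod_congr rfl fun i hi => by
            rw [hwdef]; simp [Finset.ne_of_mem_erase hi]
      have hP2 : (∏ i ∈ Finset.univ.erase o, N i o)^2 = (N o o)^4 * Q := by
        have hc4 : (Finset.univ.erase o).card = 4 := by
          rw [Finset.card_erase_of_mem (Finset.mem_univ o), Finset.card_univ, hcard5]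
        calc (∏ i ∈ Finset.univ.erase o, N i o)^2
            = ∏ i ∈ Finset.univ.erase o, (N i o * N i o) := by
              rw [Finset.prod_mul_distrib]; ring
          _ = ∏ i ∈ Finset.univ.erase o, (N o o * N i i) := by
              refine Finset.prod_congr rfl fun i hi => ?_
              have := hR1 i o (Finset.ne_of_mem_erase hi)
              linarith
          _ = (N o o)^4 * Q := by
              rw [Finset.prod_mul_distrib, Finset.prod_const, hc4, hQdef]
      have hdetN : N.det = -48 * (N o o * Q) := by
        have h5ne : (N o o)^5 ≠ 0 := pow_ne_zero 5 (hdnz o)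
        apply mul_left_cancel₀ h5ne
        rw [hdetfact, hprodw]
        have : (-(N o o) * ∏ i ∈ Finset.univ.erase o, N i o)^2
            = (N o o)^2 * ((N o o)^4 * Q) := by
          rw [mul_pow, neg_pow, hP2]; ring
        rw [this]; ring
      -- value of the complementary triple minor
      have htrv : pminor N {o, c, d} = -4 * (N o o * (N c c * N d d)) := by
        rw [pminor_triple N hoc hod hcd, hsE o c, hsE o d, hsE c d]
        have e1 := hR1 c d hcd
        have e2 := hR1 o c hoc
        have e3 := hR1 o d hod
        have e4 := hR2 o c d hoc hod hcd
        linear_combination (-3 * N o o) * e1 - N d d * e2 - N c c * e3 + 2 * N c d * e4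
      -- the complement identity
      have hcompl : (({a, b} : Finset ι)ᶜ) = {o, c, d} := by
        ext x
        simp only [Finset.mem_compl, Finset.mem_insert, Finset.mem_singleton]
        rcases hall x with rfl | rfl | rfl | rfl | rfl
        · simp [hoa, hob]
        · simp [hca, hcb]
        · simp [hda, hdb]
        · simp [hab, Ne.symm hoa, Ne.symm hca, Ne.symm hda]
        · simp [Ne.symm hab, Ne.symm hob, Ne.symm hcb, Ne.symm hdb]
      have herase : Finset.univ.erase o = {c, d, a, b} := by
        ext x
        simp only [Finset.mem_erase, Finset.mem_univ, and_true, Finset.mem_insert,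
          Finset.mem_singleton]
        rcases hall x with rfl | rfl | rfl | rfl | rfl
        · simp [hoc, hod, hoa, hob]
        · simp [Ne.symm hoc]
        · simp [Ne.symm hod]
        · simp [Ne.symm hoa]
        · simp [Ne.symm hob]
      have hQval : Q = N c c * (N d d * (N a a * N b b)) := by
        rw [hQdef, herase, Finset.prod_insert (by simp [hcd, hca, hcb]),
          Finset.prod_insert (by simp [hda, hdb]), Finset.prod_insert (by simp [hab]),
          Finset.prod_singleton]
      -- final contradiction
      have hjn := jN {a, b}
      rw [hcompl, htrv, hdetN, hQval] at hjn
      have hX : N o o * (N c c * N d d) ≠ 0 :=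
        mul_ne_zero (hdnz o) (mul_ne_zero (hdnz c) (hdnz d))
      have h12 : (N o o * (N c c * N d d)) * (pminor M {a, b} * (12 * (N a a * N b b)))
          = (N o o * (N c c * N d d)) * 1 := by
        linear_combination (-(1:ℝ)/4) * hjn
      have hfin : pminor M {a, b} * (12 * (N a a * N b b)) = 1 := mul_left_cancel₀ hX h12
      have hab2 := hR1 a b hab
      have hpos : 0 < N a a * N b b := by
        rw [← hab2]
        exact mul_self_pos.mpr (hoff a b hab)
      have hcab : ({a, b} : Finset ι).card = 2 := by
        rw [Finset.card_insert_of_notMem (by simp [hab]), Finset.card_singleton]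
      have hneg := h2 {a, b} hcab
      nlinarith [hfin, hpos, hneg]
    · -- n = 6
      subst h6'
      have hcard6 : Fintype.card ι = 6 := hcard
      have hd : ∀ i : ι, N i i = 0 := by
        intro i
        have hj := jM {i}
        have hz : pminor M (({i} : Finset ι)ᶜ) = 0 := by
          refine hIH _ ?_ ?_ <;> rw [Finset.card_compl, hcard6, Finset.card_singleton] <;> omega
        rw [hz] at hj
        rcases mul_eq_zero.mp hj with h | h
        · rwa [pminor_singleton] at h
        · exact absurd h hdet
      have h4m : ∀ S : Finset ι, S.card = 4 → pminor N S ≠ 0 := by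
        intro S hS h0
        have hj := jN Sᶜ
        rw [compl_compl, h0] at hj
        have hc2 : (Sᶜ).card = 2 := by rw [Finset.card_compl, hcard6, hS]
        have hlt := h2 _ hc2
        rcases mul_eq_zero.mp hj with h | h
        · exact absurd h (ne_of_lt hlt)
        · exact hNdet h
      have htri : ∀ i j l : ι, i ≠ j → i ≠ l → j ≠ l → N i j * N i l * N j l = 0 := by
        intro i j l hij hil hjl
        have hj := jM {i, j, l}
        have hc3 : (({i, j, l} : Finset ι)ᶜ).card = 3 := by
          rw [Finset.card_compl, hcard6, Finset.card_insert_of_notMem (by simp [hij, hil]),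
            Finset.card_insert_of_notMem (by simp [hjl]), Finset.card_singleton]
        rw [h3 _ hc3] at hj
        rcases mul_eq_zero.mp hj with h | h
        · rw [pminor_triple N hij hil hjl, hd i, hd j, hd l, hsE i j, hsE i l, hsE j l] at h
          have h' : 2 * (N i j * N i l * N j l) = 0 := by linear_combination h
          linarith
        · exact absurd h hdet
      have hdeg : ∀ v x y z : ι, x ≠ v → y ≠ v → z ≠ v → x ≠ y → x ≠ z → y ≠ z →
          N v x = 0 → N v y = 0 → N v z = 0 → False := by
        intro v x y z hxv hyv hzv hxy hxz hyz h1 h2' h3'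
        have hc4 : ({v, x, y, z} : Finset ι).card = 4 := by
          rw [Finset.card_insert_of_notMem (by simp [Ne.symm hxv, Ne.symm hyv, Ne.symm hzv]),
            Finset.card_insert_of_notMem (by simp [hxy, hxz]),
            Finset.card_insert_of_notMem (by simp [hyz]), Finset.card_singleton]
        apply h4m _ hc4
        rw [pminor_eq_det N {v, x, y, z} ![v, x, y, z]
          (emb4_inj (Ne.symm hxv) (Ne.symm hyv) (Ne.symm hzv) hxy hxz hyz)
          (by intro t; fin_cases t <;> simp) (by simp [hc4])]
        apply Matrix.det_eq_zero_of_row_eq_zero 0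
        intro j
        fin_cases j <;> simp [Matrix.submatrix_apply, hd v, h1, h2', h3']
      -- pick a vertex and three neighbours
      have hex : ∀ v : ι, ∃ x y z : ι, x ≠ v ∧ y ≠ v ∧ z ≠ v ∧ x ≠ y ∧ x ≠ z ∧ y ≠ z ∧
          N v x ≠ 0 ∧ N v y ≠ 0 ∧ N v z ≠ 0 := by
        intro v
        classical
        set Tn := Finset.univ.filter (fun x => x ≠ v ∧ N v x ≠ 0) with hTn
        have hTn3 : 3 ≤ Tn.card := by
          by_contra hlt
          push_neg at hlt
          set Tz := Finset.univ.filter (fun x => x ≠ v ∧ N v x = 0) with hTz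
          have hunion : Tz ∪ Tn = Finset.univ.erase v := by
            ext x
            simp only [hTz, hTn, Finset.mem_union, Finset.mem_filter, Finset.mem_univ,
              true_and, Finset.mem_erase, and_true]
            by_cases hx : x = v
            · simp [hx]
            · simp [hx]
              tauto
          have hdisj : Disjoint Tz Tn := by
            rw [Finset.disjoint_left]
            intro x hx hx'
            simp only [hTz, hTn, Finset.mem_filter] at hx hx'
            exact hx'.2.2 hx.2.2
          have hcard' : Tz.card + Tn.card = 5 := by
            rw [← Finset.card_union_of_disjoint hdisj, hunion,
              Finset.card_erase_of_mem (Finset.mem_univ v), Finset.card_univ, hcard6]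
          have h3z : 3 ≤ Tz.card := by omega
          obtain ⟨U, hU, hU3⟩ := Finset.exists_subset_card_eq h3z
          obtain ⟨x, y, z, hxy, hxz, hyz, rfl⟩ := Finset.card_eq_three.mp hU3
          have hx := Finset.mem_filter.mp (hU (by simp : x ∈ ({x, y, z} : Finset ι)))
          have hy := Finset.mem_filter.mp (hU (by simp : y ∈ ({x, y, z} : Finset ι)))
          have hz := Finset.mem_filter.mp (hU (by simp : z ∈ ({x, y, z} : Finset ι)))
          exact hdeg v x y z hx.2.1 hy.2.1 hz.2.1 hxy hxz hyz hx.2.2 hy.2.2 hz.2.2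
        obtain ⟨U, hU, hU3⟩ := Finset.exists_subset_card_eq hTn3
        obtain ⟨x, y, z, hxy, hxz, hyz, rfl⟩ := Finset.card_eq_three.mp hU3
        have hx := Finset.mem_filter.mp (hU (by simp : x ∈ ({x, y, z} : Finset ι)))
        have hy := Finset.mem_filter.mp (hU (by simp : y ∈ ({x, y, z} : Finset ι)))
        have hz := Finset.mem_filter.mp (hU (by simp : z ∈ ({x, y, z} : Finset ι)))
        exact ⟨x, y, z, hx.2.1, hy.2.1, hz.2.1, hxy, hxz, hyz, hx.2.2, hy.2.2, hz.2.2⟩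
      obtain ⟨v⟩ : Nonempty ι := Fintype.card_pos_iff.mp (by omega)
      obtain ⟨a, b, c, hav, hbv, hcv, habn, hacn, hbcn, hNva, hNvb, hNvc⟩ := hex v
      -- the two remaining vertices
      have hcW : (Finset.univ \ {v, a, b, c} : Finset ι).card = 2 := by
        rw [Finset.card_sdiff_of_subset (Finset.subset_univ _), Finset.card_univ, hcard6,
          Finset.card_insert_of_notMem (by simp [Ne.symm hav, Ne.symm hbv, Ne.symm hcv]),
          Finset.card_insert_of_notMem (by simp [habn, hacn]),
          Finset.card_insert_of_notMem (by simp [hbcn]), Finset.card_singleton]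
      obtain ⟨w₁, w₂, hw12, hW⟩ := Finset.card_eq_two.mp hcW
      have hw1 : w₁ ∉ ({v, a, b, c} : Finset ι) := by
        have : w₁ ∈ Finset.univ \ {v, a, b, c} := by rw [hW]; simp
        exact (Finset.mem_sdiff.mp this).2
      have hw2 : w₂ ∉ ({v, a, b, c} : Finset ι) := by
        have : w₂ ∈ Finset.univ \ {v, a, b, c} := by rw [hW]; simp
        exact (Finset.mem_sdiff.mp this).2
      simp only [Finset.mem_insert, Finset.mem_singleton, not_or] at hw1 hw2
      obtain ⟨hw1v, hw1a, hw1b, hw1c⟩ := hw1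
      obtain ⟨hw2v, hw2a, hw2b, hw2c⟩ := hw2
      have hvw1 : v ≠ w₁ := fun h => hw1v h.symm
      have hvw2 : v ≠ w₂ := fun h => hw2v h.symm
      have haw1 : a ≠ w₁ := fun h => hw1a h.symm
      have haw2 : a ≠ w₂ := fun h => hw2a h.symm
      have hbw1 : b ≠ w₁ := fun h => hw1b h.symm
      have hcw1 : c ≠ w₁ := fun h => hw1c h.symm
      have hbw2 : b ≠ w₂ := fun h => hw2b h.symm
      have hcw2 : c ≠ w₂ := fun h => hw2c h.symm
      -- triangle-freeness: a,b,c pairwise non-adjacent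
      have hNab : N a b = 0 := by
        have := htri v a b (Ne.symm hav) (Ne.symm hbv) habn
        rcases mul_eq_zero.mp this with h | h
        · rcases mul_eq_zero.mp h with h' | h'
          · exact absurd h' hNva
          · exact absurd h' hNvb
        · exact h
      have hNac : N a c = 0 := by
        have := htri v a c (Ne.symm hav) (Ne.symm hcv) hacn
        rcases mul_eq_zero.mp this with h | h
        · rcases mul_eq_zero.mp h with h' | h'
          · exact absurd h' hNva
          · exact absurd h' hNvc
        · exact h
      -- a is adjacent to w₁ and w₂
      have hNaw1 : N a w₁ ≠ 0 := by
        intro h0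
        exact hdeg a b c w₁ (Ne.symm habn) (Ne.symm hacn) hw1a hbcn hbw1 hcw1 hNab hNac h0
      have hNaw2 : N a w₂ ≠ 0 := by
        intro h0
        exact hdeg a b c w₂ (Ne.symm habn) (Ne.symm hacn) hw2a hbcn hbw2 hcw2 hNab hNac h0
      -- v is not adjacent to w₁, w₂; w₁ not adjacent to w₂
      have hNvw1 : N v w₁ = 0 := by
        have := htri v a w₁ (Ne.symm hav) hvw1 haw1
        rcases mul_eq_zero.mp this with h | h
        · rcases mul_eq_zero.mp h with h' | h'
          · exact absurd h' hNva
          · exact h'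
        · exact absurd (hsE a w₁ ▸ h) hNaw1
      have hNvw2 : N v w₂ = 0 := by
        have := htri v a w₂ (Ne.symm hav) hvw2 haw2
        rcases mul_eq_zero.mp this with h | h
        · rcases mul_eq_zero.mp h with h' | h'
          · exact absurd h' hNva
          · exact h'
        · exact absurd (hsE a w₂ ▸ h) hNaw2
      have hNw12 : N w₁ w₂ = 0 := by
        have := htri a w₁ w₂ haw1 haw2 hw12
        rcases mul_eq_zero.mp this with h | h
        · rcases mul_eq_zero.mp h with h' | h'
          · exact absurd h' hNaw1
          · exact absurd h' hNaw2
        · exact h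
      -- the singular 4×4 block {v, w₁, w₂, a}
      have hc4 : ({v, w₁, w₂, a} : Finset ι).card = 4 := by
        rw [Finset.card_insert_of_notMem (by simp [hvw1, hvw2, Ne.symm hav]),
          Finset.card_insert_of_notMem (by simp [hw12, hw1a]),
          Finset.card_insert_of_notMem (by simp [hw2a]), Finset.card_singleton]
      apply h4m _ hc4
      rw [pminor_eq_det N {v, w₁, w₂, a} ![v, w₁, w₂, a]
        (emb4_inj hvw1 hvw2 (Ne.symm hav) hw12 hw1a hw2a)
        (by intro t; fin_cases t <;> simp) (by simp [hc4])]
      apply (Matrix.exists_vecMul_eq_zero_iff).mp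
      refine ⟨![N a w₁, -(N v a), 0, 0], ?_, ?_⟩
      · intro h
        have := congrFun h 0
        simp at this
        exact hNaw1 this
      · ext j
        simp only [Matrix.vecMul, dotProduct, Fin.sum_univ_four, Matrix.submatrix_apply]
        fin_cases j
        · simp [hd v, hsE v w₁, hNvw1]
        · simp [hNvw1, hd w₁]
        · simp [hNvw2, hNw12]
        · simp [hsE a w₁]
          ring

    · -- n ≥ 7
      have hd : ∀ i : ι, N i i = 0 := by
        intro i
        have hj := jM {i}
        have hc : ({i} : Finset ι)ᶜ.card = n - 1 := by
          rw [Finset.card_compl, hcard]; simp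
        have hz : pminor M ({i} : Finset ι)ᶜ = 0 := hIH _ (by omega) (by omega)
        rw [hz] at hj
        have := mul_eq_zero.mp hj
        rcases this with h | h
        · rwa [pminor_singleton] at h
        · exact absurd h hdet
      have hod : ∀ i j : ι, i ≠ j → N i j = 0 := by
        intro i j hij
        have hj := jM {i, j}
        have hc : ({i, j} : Finset ι).card = 2 := by
          rw [Finset.card_insert_of_notMem (by simp [hij])]; rfl
        have hz : pminor M ({i, j} : Finset ι)ᶜ = 0 := by
          refine hIH _ ?_ ?_ <;> rw [Finset.card_compl, hcard, hc] <;> omega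
        rw [hz] at hj
        rcases mul_eq_zero.mp hj with h | h
        · rw [pminor_pair N hij, hd i, hd j, hsE i j] at h
          have : N i j * N i j = 0 := by linarith
          exact mul_self_eq_zero.mp this
        · exact absurd h hdet
      have hN0 : N = 0 := by
        ext i j
        by_cases h : i = j
        · subst h; simp [hd i]
        · simp [hod i j h]
      rw [hN0] at hNdet
      have : Nonempty ι := Fintype.card_pos_iff.mp (by omega)
      exact hNdet Matrix.det_zero

end ClaimJ

lemma exists_adj {n : ℕ} (B : Matrix (Fin n) (Fin n) ℝ) (k : ℕ)
    (hne : ∀ α : Finset (Fin n), α.card = k + 2 → pminor B α ≠ 0) :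
    ∀ (d : ℕ) (α β : Finset (Fin n)), α.card = k + 2 → β.card = k + 2 → (α \ β).card = d →
    0 < pminor B α → pminor B β < 0 →
    ∃ α' β' : Finset (Fin n), α'.card = k + 2 ∧ β'.card = k + 2 ∧ (α' ∩ β').card = k + 1 ∧
      0 < pminor B α' ∧ pminor B β' < 0 := by
  intro d
  induction d with
  | zero =>
    intro α β hα hβ hd hp hq
    have hsub : α ⊆ β := by
      rw [← Finset.sdiff_eq_empty_iff_subset, ← Finset.card_eq_zero]
      exact hd
    have heq : α = β := Finset.eq_of_subset_of_card_le hsub (le_of_eq (hβ.trans hα.symm))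
    rw [heq] at hp
    linarith
  | succ d IH =>
    intro α β hα hβ hd hp hq
    have ha : (α \ β).Nonempty := by rw [← Finset.card_pos, hd]; omega
    obtain ⟨a, haa⟩ := ha
    obtain ⟨haα, haβ⟩ := Finset.mem_sdiff.mp haa
    have hb : (β \ α).Nonempty := by
      by_contra h0
      rw [Finset.not_nonempty_iff_eq_empty, Finset.sdiff_eq_empty_iff_subset] at h0
      have heq : β = α := Finset.eq_of_subset_of_card_le h0 (le_of_eq (hα.trans hβ.symm))
      rw [heq, Finset.sdiff_self, Finset.card_empty] at hd
      omega
    obtain ⟨b, hbb⟩ := hb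
    obtain ⟨hbβ, hbα⟩ := Finset.mem_sdiff.mp hbb
    set α' := insert b (α.erase a) with hα'
    have hbe : b ∉ α.erase a := fun h => hbα (Finset.mem_of_mem_erase h)
    have hcα' : α'.card = k + 2 := by
      rw [hα', Finset.card_insert_of_notMem hbe, Finset.card_erase_of_mem haα, hα]
      omega
    rcases lt_trichotomy (pminor B α') 0 with hneg' | hzero | hpos'
    · refine ⟨α, α', hα, hcα', ?_, hp, hneg'⟩
      have hintr : α ∩ α' = α.erase a := by
        ext x
        simp only [Finset.mem_inter, hα', Finset.mem_insert, Finset.mem_erase]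
        constructor
        · rintro ⟨hxα, rfl | ⟨hxa, _⟩⟩
          · exact absurd hxα hbα
          · exact ⟨hxa, hxα⟩
        · rintro ⟨hxa, hxα⟩
          exact ⟨hxα, Or.inr ⟨hxa, hxα⟩⟩
      rw [hintr, Finset.card_erase_of_mem haα, hα]
      omega
    · exact absurd hzero (hne α' hcα')
    · refine IH α' β hcα' hβ ?_ hpos' hq
      have hsd : α' \ β = (α \ β).erase a := by
        ext x
        simp only [hα', Finset.mem_sdiff, Finset.mem_insert, Finset.mem_erase]
        constructor
        · rintro ⟨rfl | ⟨hxa, hxα⟩, hxβ⟩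
          · exact absurd hbβ hxβ
          · exact ⟨hxa, hxα, hxβ⟩
        · rintro ⟨hxa, hxα, hxβ⟩
          exact ⟨Or.inr ⟨hxa, hxα⟩, hxβ⟩
      rw [hsd, Finset.card_erase_of_mem haa, hd]
      omega

set_option maxHeartbeats 2000000 in
/-- The sequence NA⁺A* is forbidden over ℝ. -/
theorem forbidden_NAplusAstar_real {n : ℕ} (B : Matrix (Fin n) (Fin n) ℝ) (hB : B.IsSymm)
    (k : ℕ) (hk1 : 1 ≤ k) (hkn : k ≤ n - 2)
    (hN : ∀ α : Finset (Fin n), α.card = k → pminor B α = 0)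
    (hAplus : ∀ α : Finset (Fin n), α.card = k + 1 → 0 < pminor B α)
    (hne : ∀ α : Finset (Fin n), α.card = k + 2 → pminor B α ≠ 0)
    (hpos : ∃ α : Finset (Fin n), α.card = k + 2 ∧ 0 < pminor B α)
    (hneg : ∃ α : Finset (Fin n), α.card = k + 2 ∧ pminor B α < 0) :
    False := by
  classical
  obtain ⟨α₀, hα₀c, hα₀p⟩ := hpos
  obtain ⟨β₀, hβ₀c, hβ₀n⟩ := hneg
  have hBE : ∀ i j, B j i = B i j := by
    intro i j
    conv_lhs => rw [← hB]
    rfl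
  rcases eq_or_lt_of_le hk1 with hk1' | hk2
  · -- k = 1
    subst hk1'
    have h2le : 2 ≤ α₀.card := by omega
    obtain ⟨t, hts, htc⟩ := Finset.exists_subset_card_eq h2le
    obtain ⟨i, j, hij, rfl⟩ := Finset.card_eq_two.mp htc
    have hpair := hAplus {i, j} (by
      rw [Finset.card_insert_of_notMem (by simp [hij]), Finset.card_singleton])
    rw [pminor_pair B hij] at hpair
    have hi := hN {i} (Finset.card_singleton i)
    have hj := hN {j} (Finset.card_singleton j)
    rw [pminor_singleton] at hi hj
    rw [hi, hj, hBE i j] at hpair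
    nlinarith [sq_nonneg (B i j), hpair]
  · -- k ≥ 2
    obtain ⟨α, β, hcα, hcβ, hint, hpα, hnβ⟩ :=
      exists_adj B k hne _ α₀ β₀ hα₀c hβ₀c rfl hα₀p hβ₀n
    have hγc0 : (α ∪ β).card = k + 3 := by
      have h := Finset.card_union_add_card_inter α β
      rw [hint, hcα, hcβ] at h
      omega
    set γ := α ∪ β with hγdef
    have hγc : γ.card = k + 3 := hγc0
    have hβαc : (β \ α).card = 1 := by
      have h := Finset.card_sdiff_add_card_inter β α
      rw [Finset.inter_comm, hint, hcβ] at h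
      omega
    have hαβc : (α \ β).card = 1 := by
      have h := Finset.card_sdiff_add_card_inter α β
      rw [hint, hcα] at h
      omega
    obtain ⟨b, hbeq⟩ := Finset.card_eq_one.mp hβαc
    obtain ⟨a, haeq⟩ := Finset.card_eq_one.mp hαβc
    have hbmem : b ∈ β ∧ b ∉ α := by
      have h : b ∈ β \ α := by rw [hbeq]; exact Finset.mem_singleton_self b
      exact Finset.mem_sdiff.mp h
    have hamem : a ∈ α ∧ a ∉ β := by
      have h : a ∈ α \ β := by rw [haeq]; exact Finset.mem_singleton_self a
      exact Finset.mem_sdiff.mp h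
    have hγa : γ.erase b = α := by
      ext x
      simp only [Finset.mem_erase, hγdef, Finset.mem_union]
      constructor
      · rintro ⟨hxb, hx | hx⟩
        · exact hx
        · by_contra hxα
          have h : x ∈ β \ α := Finset.mem_sdiff.mpr ⟨hx, hxα⟩
          rw [hbeq, Finset.mem_singleton] at h
          exact hxb h
      · intro hx
        exact ⟨fun h => hbmem.2 (h ▸ hx), Or.inl hx⟩
    have hγb : γ.erase a = β := by
      ext x
      simp only [Finset.mem_erase, hγdef, Finset.mem_union]
      constructor
      · rintro ⟨hxa, hx | hx⟩
        · by_contra hxβ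
          have h : x ∈ α \ β := Finset.mem_sdiff.mpr ⟨hx, hxβ⟩
          rw [haeq, Finset.mem_singleton] at h
          exact hxa h
        · exact hx
      · intro hx
        exact ⟨fun h => hamem.2 (h ▸ hx), Or.inr hx⟩
    have haγ : a ∈ γ := Finset.mem_union_left β hamem.1
    have hbγ : b ∈ γ := Finset.mem_union_right α hbmem.1
    set G : Matrix {x // x ∈ γ} {x // x ∈ γ} ℝ :=
      B.submatrix (fun i : γ => (i : Fin n)) (fun i : γ => (i : Fin n)) with hGdef
    have hdetG : G.det = pminor B γ := rfl
    have hGsym : Gᵀ = G := by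
      ext i j
      exact hBE _ _
    set ea : {x // x ∈ γ} := ⟨a, haγ⟩ with hea
    set eb : {x // x ∈ γ} := ⟨b, hbγ⟩ with heb
    have heaeb : ea ≠ eb := by
      intro h
      have h' : a = b := congrArg Subtype.val h
      exact hamem.2 (h' ▸ hbmem.1)
    have hmap : ∀ S : Finset {x // x ∈ γ},
        pminor G S = pminor B (S.map (Function.Embedding.subtype _)) :=
      pminor_submatrix B γ
    have hcardsub : Fintype.card {x // x ∈ γ} = k + 3 := by
      rw [Fintype.card_coe, hγc]
    have hmapb : (({eb} : Finset {x // x ∈ γ})ᶜ).map (Function.Embedding.subtype _) = α := by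
      ext x
      simp only [Finset.mem_map, Finset.mem_compl, Finset.mem_singleton,
        Function.Embedding.coe_subtype]
      constructor
      · rintro ⟨z, hz, rfl⟩
        rw [← hγa]
        exact Finset.mem_erase.mpr ⟨fun h => hz (Subtype.ext h), z.2⟩
      · intro hx
        refine ⟨⟨x, Finset.mem_union_left β hx⟩, ?_, rfl⟩
        intro h
        have h' : x = b := congrArg Subtype.val h
        exact hbmem.2 (h' ▸ hx)
    have hmapa : (({ea} : Finset {x // x ∈ γ})ᶜ).map (Function.Embedding.subtype _) = β := by
      ext x
      simp only [Finset.mem_map, Finset.mem_compl, Finset.mem_singleton,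
        Function.Embedding.coe_subtype]
      constructor
      · rintro ⟨z, hz, rfl⟩
        rw [← hγb]
        exact Finset.mem_erase.mpr ⟨fun h => hz (Subtype.ext h), z.2⟩
      · intro hx
        refine ⟨⟨x, Finset.mem_union_right α hx⟩, ?_, rfl⟩
        intro h
        have h' : x = a := congrArg Subtype.val h
        exact hamem.2 (h' ▸ hx)
    have hmapab : (({ea, eb} : Finset {x // x ∈ γ})ᶜ).map (Function.Embedding.subtype _)
        = α ∩ β := by
      ext x
      simp only [Finset.mem_map, Finset.mem_compl, Finset.mem_insert, Finset.mem_singleton,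
        Function.Embedding.coe_subtype, Finset.mem_inter]
      constructor
      · rintro ⟨z, hz, rfl⟩
        push_neg at hz
        constructor
        · rw [← hγa]
          exact Finset.mem_erase.mpr ⟨fun h => hz.2 (Subtype.ext h), z.2⟩
        · rw [← hγb]
          exact Finset.mem_erase.mpr ⟨fun h => hz.1 (Subtype.ext h), z.2⟩
      · rintro ⟨hxα, hxβ⟩
        refine ⟨⟨x, Finset.mem_union_left β hxα⟩, ?_, rfl⟩
        rw [not_or]
        constructor
        · intro h
          have h' : x = a := congrArg Subtype.val h
          exact hamem.2 (h' ▸ hxβ)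
        · intro h
          have h' : x = b := congrArg Subtype.val h
          exact hbmem.2 (h' ▸ hxα)
    by_cases hG0 : pminor B γ = 0
    · -- singular union
      have hGdet0 : G.det = 0 := by rw [hdetG]; exact hG0
      obtain ⟨w, hw0, hww⟩ := Matrix.exists_mulVec_eq_zero_iff.mpr hGdet0
      have hker : ∀ z : {x // x ∈ γ} → ℝ, G.mulVec z = 0 → ∀ t, z t = 0 → z = 0 := by
        intro z hz t ht
        by_contra hz0
        have hex : ∃ s, z s ≠ 0 := by
          by_contra h
          push_neg at h
          exact hz0 (funext h)
        obtain ⟨s, hs⟩ := hex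
        have hcer : (γ.erase t.val).card = k + 2 := by
          rw [Finset.card_erase_of_mem t.2, hγc]
          omega
        apply hne _ hcer
        have hinj : Function.Injective
            (fun x : {y : {x // x ∈ γ} // y ≠ t} => ((x : {x // x ∈ γ}) : Fin n)) := by
          intro x y hxy
          exact Subtype.ext (Subtype.ext hxy)
        rw [pminor_eq_det B (γ.erase t.val)
          (fun x : {y : {x // x ∈ γ} // y ≠ t} => ((x : {x // x ∈ γ}) : Fin n)) hinj
          (fun x => Finset.mem_erase.mpr ⟨fun h => x.2 (Subtype.ext h), x.1.2⟩)
          (by rw [card_subtype_ne, hcardsub, hcer]; omega)]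
        exact submatrix_ne_det_eq_zero G z hz t ht s hs
      have hwall : ∀ t, w t ≠ 0 := fun t ht => hw0 (hker w hww t ht)
      set A := G.adjugate with hA
      have hGA : G * A = 0 := by rw [hA, Matrix.mul_adjugate, hGdet0, zero_smul]
      have hcol : ∀ j, G.mulVec (fun i => A i j) = 0 := by
        intro j
        funext i
        have h := congrFun (congrFun hGA i) j
        simpa [Matrix.mul_apply, Matrix.mulVec, dotProduct] using h
      have hprop : ∀ j s t, w t * A s j = A t j * w s := by
        intro j s t
        have hlin : G.mulVec (fun i => w t * A i j - A t j * w i) = 0 := by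
          funext i
          have h1 := congrFun (hcol j) i
          have h2 := congrFun hww i
          simp only [Matrix.mulVec, dotProduct, Pi.zero_apply] at h1 h2 ⊢
          have hsplit : ∑ l, G i l * (w t * A l j - A t j * w l)
              = w t * (∑ l, G i l * A l j) - A t j * (∑ l, G i l * w l) := by
            rw [Finset.mul_sum, Finset.mul_sum, ← Finset.sum_sub_distrib]
            exact Finset.sum_congr rfl fun l _ => by ring
          rw [hsplit, h1, h2]
          ring
        have hz := hker _ hlin t (by ring)
        have h := congrFun hz s
        simp only [Pi.zero_apply] at h
        linarith
      have hdiagA : ∀ t : {x // x ∈ γ}, A t t = pminor B (γ.erase t.val) := by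
        intro t
        rw [hA, adjugate_diag G t, pminor_eq_det B (γ.erase t.val)
          (fun x : {y : {x // x ∈ γ} // y ≠ t} => ((x : {x // x ∈ γ}) : Fin n))
          (fun x y hxy => Subtype.ext (Subtype.ext hxy))
          (fun x => Finset.mem_erase.mpr ⟨fun h => x.2 (Subtype.ext h), x.1.2⟩)
          (by rw [card_subtype_ne, hcardsub, Finset.card_erase_of_mem t.2, hγc])]
        rfl
      have hAα : A eb eb = pminor B α := by
        rw [hdiagA eb]
        have : (eb : {x // x ∈ γ}).val = b := rfl
        rw [this, hγa]
      have hAβ : A ea ea = pminor B β := by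
        rw [hdiagA ea]
        have : (ea : {x // x ∈ γ}).val = a := rfl
        rw [this, hγb]
      have h1 := hprop eb eb ea
      have h2 := hprop ea ea eb
      have hsymA : A eb ea = A ea eb := by
        have h := Matrix.adjugate_transpose G
        rw [hGsym] at h
        have h' := congrFun (congrFun h ea) eb
        simpa [Matrix.transpose_apply, hA] using h'
      have hwa := hwall ea
      have hwb := hwall eb
      have key : (pminor B α * pminor B β) * (w ea * w eb)
          = (A ea eb * A ea eb) * (w ea * w eb) := by
        rw [← hAα, ← hAβ]
        linear_combination (A ea ea * w eb) * h1 + (A ea eb * w eb) * h2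
          + (A ea eb * w ea * w eb) * hsymA
      have hprodpos := mul_right_cancel₀ (mul_ne_zero hwa hwb) key
      nlinarith [hpα, hnβ, hprodpos, sq_nonneg (A ea eb)]
    · -- nonsingular union
      have hGne : G.det ≠ 0 := by rw [hdetG]; exact hG0
      have hU : IsUnit G.det := isUnit_iff_ne_zero.mpr hGne
      have hsymN : (G⁻¹)ᵀ = G⁻¹ := by rw [Matrix.transpose_nonsing_inv, hGsym]
      have hNE : G⁻¹ eb ea = G⁻¹ ea eb := by
        have h := congrFun (congrFun hsymN ea) eb
        simpa [Matrix.transpose_apply] using h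
      have e1 : G⁻¹ eb eb * G.det = pminor B α := by
        have h := jacobi G hU {eb}
        rw [pminor_singleton, hmap, hmapb] at h
        exact h
      have e2 : G⁻¹ ea ea * G.det = pminor B β := by
        have h := jacobi G hU {ea}
        rw [pminor_singleton, hmap, hmapa] at h
        exact h
      have e3 : (G⁻¹ ea ea * G⁻¹ eb eb - G⁻¹ ea eb * G⁻¹ ea eb) * G.det = pminor B (α ∩ β) := by
        have h := jacobi G hU {ea, eb}
        rw [pminor_pair (G⁻¹) heaeb, hmap, hmapab, hNE] at h
        exact h
      have hip : 0 < pminor B (α ∩ β) := hAplus _ hint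
      have key : pminor B α * pminor B β
          = (G.det * G⁻¹ ea eb)^2 + G.det * pminor B (α ∩ β) := by
        linear_combination (-(pminor B β)) * e1 + (-(G⁻¹ eb eb * G.det)) * e2 + G.det * e3
      have hDneg : G.det < 0 := by
        rcases lt_trichotomy G.det 0 with h | h | h
        · exact h
        · exact absurd h hGne
        · nlinarith [key, hip, hpα, hnβ, sq_nonneg (G.det * G⁻¹ ea eb)]
      have hcl := claimJ (k + 3) (G⁻¹) hcardsub hsymN (by omega)
        (by
          intro S hS
          have h := jacobi G hU S
          rw [hmap] at h
          have hcm : ((Sᶜ).map (Function.Embedding.subtype _)).card = k + 1 := by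
            rw [Finset.card_map, Finset.card_compl, hcardsub, hS]
            omega
          have hp := hAplus _ hcm
          nlinarith [h, hp, hDneg])
        (by
          intro S hS
          have h := jacobi G hU S
          rw [hmap] at h
          have hcm : ((Sᶜ).map (Function.Embedding.subtype _)).card = k := by
            rw [Finset.card_map, Finset.card_compl, hcardsub, hS]
            omega
          rw [hN _ hcm] at h
          rcases mul_eq_zero.mp h with h' | h'
          · exact h'
          · exact absurd h' hGne)
      have hfin : (G⁻¹).det ≠ 0 := by
        rw [Matrix.det_nonsing_inv, Ring.inverse_eq_inv']
        exact inv_ne_zero hGne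
      exact hfin hcl
end

section
/- There is no n×n real symmetric matrix B and index k with 1 ≤ k ≤ n−2 such that: all order-k principal minors of B are zero, all order-(k+1) principal minors of B are nonzero and of a common sign (all positive or all negative), and all order-(k+2) principal minors of B are zero. (The sequence NAN, with A of definite sign, is forbidden over ℝ.) -/
open ComplexOrder

open Matrix
section Aux

variable {ι : Type*} [DecidableEq ι] [Fintype ι]

lemma mulVec_restrict (C : Matrix ι ι ℝ) (γ : Finset ι) (x : ι → ℝ)
    (hx : ∀ i, i ∉ γ → x i = 0) :
    (C.submatrix (fun a : γ => (a : ι)) (fun a : γ => (a : ι))).mulVec (fun a : γ => x a) =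
      fun a : γ => C.mulVec x a := by
  funext a
  simp only [Matrix.mulVec, Matrix.submatrix_apply, dotProduct]
  rw [Finset.univ_eq_attach, Finset.sum_attach γ (fun j => C a j * x j)]
  exact (Finset.sum_subset (Finset.subset_univ γ) (f := fun j => C a j * x j)
    (fun l _ hl => by show C (a : ι) l * x l = 0; rw [hx l hl, mul_zero]))

lemma eq_zero_of_pminor_ne_zero (C : Matrix ι ι ℝ) (γ : Finset ι)
    (h : pminor C γ ≠ 0) (x : ι → ℝ) (hx : ∀ i, i ∉ γ → x i = 0)
    (hCx : ∀ i ∈ γ, C.mulVec x i = 0) : x = 0 := by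
  have hker : (fun a : γ => x a) = 0 := by
    by_contra hne
    exact h (Matrix.exists_mulVec_eq_zero_iff.mp
      ⟨_, hne, by rw [mulVec_restrict C γ x hx]; funext a; exact hCx a a.2⟩)
  funext i
  by_cases hi : i ∈ γ
  · exact congrFun hker ⟨i, hi⟩
  · exact hx i hi

lemma exists_of_pminor_eq_zero (C : Matrix ι ι ℝ) (γ : Finset ι) (h : pminor C γ = 0) :
    ∃ x : ι → ℝ, x ≠ 0 ∧ (∀ i, i ∉ γ → x i = 0) ∧ ∀ i ∈ γ, C.mulVec x i = 0 := by
  obtain ⟨y, hy0, hy⟩ := Matrix.exists_mulVec_eq_zero_iff.mpr h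
  refine ⟨fun i => if hi : i ∈ γ then y ⟨i, hi⟩ else 0, ?_, fun i hi => dif_neg hi, ?_⟩
  · intro hzero
    apply hy0
    funext a
    have := congrFun hzero a
    simpa [dif_pos a.2] using this
  · intro i hi
    have hxy : (fun a : γ => (if ha : (a : ι) ∈ γ then y ⟨a, ha⟩ else 0)) = y := by
      funext a; simp [dif_pos a.2]
    have := mulVec_restrict C γ (fun i => if hi : i ∈ γ then y ⟨i, hi⟩ else 0)
      (fun i hi => dif_neg hi)
    have h2 := congrFun this ⟨i, hi⟩
    rw [hxy, hy] at h2
    exact h2.symm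

end Aux

set_option maxHeartbeats 1000000 in
lemma core {ι : Type*} [DecidableEq ι] [Fintype ι] (k : ℕ) (hk : 1 ≤ k)
    (hcard : Fintype.card ι = k + 2) (C : Matrix ι ι ℝ) (hC : C.IsSymm)
    (h2 : ∀ γ : Finset ι, γ.card = k → pminor C γ = 0)
    (h1 : ∀ γ : Finset ι, γ.card = k + 1 → pminor C γ ≠ 0)
    (h0 : C.det = 0) : False := by
  have hsymm : ∀ i j, C i j = C j i := fun i j => (hC.apply i j).symm
  have hvecMul : ∀ y, Matrix.vecMul y C = C.mulVec y := by
    intro y; funext j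
    simp only [Matrix.vecMul, Matrix.mulVec, dotProduct]
    exact Finset.sum_congr rfl fun i _ => by rw [hsymm j i]; ring
  have hdotC : ∀ x y, dotProduct x (C.mulVec y) = dotProduct (C.mulVec x) y := by
    intro x y; rw [Matrix.dotProduct_mulVec, hvecMul]
  obtain ⟨v, hv0, hvC⟩ := Matrix.exists_mulVec_eq_zero_iff.mpr h0
  have hpm1 : ∀ i : ι, pminor C ({i}ᶜ) ≠ 0 := by
    intro i; apply h1; rw [Finset.card_compl, Finset.card_singleton, hcard]; omega
  have hvne : ∀ i, v i ≠ 0 := by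
    intro i hvi
    apply hv0
    apply eq_zero_of_pminor_ne_zero C ({i}ᶜ) (hpm1 i) v
    · intro l hl
      have hli : l = i := by simpa using hl
      rwa [hli]
    · intro l _; rw [hvC]; rfl
  have hne : Nonempty ι := Fintype.card_pos_iff.mp (by omega)
  obtain ⟨i₀⟩ := hne
  have hker : ∀ x : ι → ℝ, C.mulVec x = 0 → ∃ t : ℝ, x = t • v := by
    intro x hx
    refine ⟨x i₀ / v i₀, ?_⟩
    have h9 : x - (x i₀ / v i₀) • v = 0 := by
      apply eq_zero_of_pminor_ne_zero C ({i₀}ᶜ) (hpm1 i₀)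
      · intro l hl
        have hli : l = i₀ := by simpa using hl
        subst hli
        simp only [Pi.sub_apply, Pi.smul_apply, smul_eq_mul]
        rw [div_mul_cancel₀ _ (hvne l)]
        ring
      · intro l _
        rw [Matrix.mulVec_sub, Matrix.mulVec_smul, hx, hvC]
        simp
    have := sub_eq_zero.mp h9
    exact this
  have hvv : dotProduct v v ≠ 0 := fun h => hv0 (dotProduct_self_eq_zero.mp h)
  set M : Matrix ι ι ℝ := C + Matrix.of (fun i j => v i * v j) with hM
  have hMmul : ∀ x, M.mulVec x = C.mulVec x + (dotProduct v x) • v := by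
    intro x; funext i
    simp only [hM, Matrix.add_mulVec, Pi.add_apply, Pi.smul_apply, smul_eq_mul]
    congr 1
    simp only [Matrix.mulVec, dotProduct, Matrix.of_apply]
    rw [Finset.sum_mul]
    exact Finset.sum_congr rfl fun j _ => by ring
  have hdetM : M.det ≠ 0 := by
    intro hdet
    obtain ⟨x, hx0, hxM⟩ := Matrix.exists_mulVec_eq_zero_iff.mpr hdet
    have h3 : C.mulVec x + (dotProduct v x) • v = 0 := by rw [← hMmul]; exact hxM
    have h4 : (dotProduct v x) * (dotProduct v v) = 0 := by
      have h5 := congrArg (fun y => dotProduct v y) h3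
      simp only [dotProduct_add, dotProduct_smul, smul_eq_mul,
        dotProduct_zero] at h5
      rw [hdotC, hvC, zero_dotProduct] at h5
      linarith
    have h5 : dotProduct v x = 0 := by
      rcases mul_eq_zero.mp h4 with h | h
      · exact h
      · exact absurd h hvv
    have h6 : C.mulVec x = 0 := by
      rw [h5, zero_smul, add_zero] at h3; exact h3
    obtain ⟨t, ht⟩ := hker x h6
    have h7 : t * (dotProduct v v) = 0 := by
      rw [ht, dotProduct_smul, smul_eq_mul] at h5; exact h5
    have h8 : t = 0 := by
      rcases mul_eq_zero.mp h7 with h | h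
      · exact h
      · exact absurd h hvv
    exact hx0 (by rw [ht, h8, zero_smul])
  set G := M⁻¹ with hG
  have hMu : IsUnit M.det := isUnit_iff_ne_zero.mpr hdetM
  have hMG : M * G = 1 := Matrix.mul_nonsing_inv M hMu
  have hGM : G * M = 1 := Matrix.nonsing_inv_mul M hMu
  have hGMvec : ∀ x, G.mulVec (M.mulVec x) = x := by
    intro x; rw [Matrix.mulVec_mulVec, hGM, Matrix.one_mulVec]
  have hMGvec : ∀ x, M.mulVec (G.mulVec x) = x := by
    intro x; rw [Matrix.mulVec_mulVec, hMG, Matrix.one_mulVec]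
  have hMsymm : Mᵀ = M := by
    funext i j
    simp only [hM, Matrix.transpose_apply, Matrix.add_apply, Matrix.of_apply]
    rw [hsymm j i]; ring
  have hGsymm : ∀ i j, G i j = G j i := by
    intro i j
    have hGT : Gᵀ = G := by rw [hG, Matrix.transpose_nonsing_inv, hMsymm]
    have := congrFun (congrFun hGT j) i
    simpa [Matrix.transpose_apply] using this
  have hstar : ∀ i j : ι, i ≠ j →
      G i i * v j ^ 2 + G j j * v i ^ 2 = 2 * G i j * (v i * v j) := by
    intro i j hij
    have hγ : (({i, j} : Finset ι)ᶜ).card = k := by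
      rw [Finset.card_compl, Finset.card_pair hij, hcard]; omega
    obtain ⟨w, hw0, hwsupp, hwker⟩ := exists_of_pminor_eq_zero C _ (h2 _ hγ)
    set u := C.mulVec w with hu
    have hwi : w i = 0 := hwsupp i (by simp)
    have hwj : w j = 0 := hwsupp j (by simp)
    have husupp : ∀ l, l ≠ i → l ≠ j → u l = 0 := by
      intro l hli hlj
      exact hwker l (by simp [Finset.mem_compl, Finset.mem_insert, Finset.mem_singleton, hli, hlj])
    have hune : u ≠ 0 := by
      intro h
      obtain ⟨t, ht⟩ := hker w h
      have h10 := congrFun ht i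
      rw [hwi, Pi.smul_apply, smul_eq_mul] at h10
      have ht0 : t = 0 := by
        rcases mul_eq_zero.mp h10.symm with h' | h'
        · exact h'
        · exact absurd h' (hvne i)
      exact hw0 (by rw [ht, ht0, zero_smul])
    have hdvu : v i * u i + v j * u j = 0 := by
      have h7 : dotProduct v u = 0 := by
        rw [hu, hdotC, hvC, zero_dotProduct]
      rw [← h7]
      show v i * u i + v j * u j = ∑ l, v l * u l
      rw [← Finset.sum_subset (Finset.subset_univ ({i, j} : Finset ι))
        (f := fun l => v l * u l) (fun l _ hl => by
          simp only [Finset.mem_insert, Finset.mem_singleton, not_or] at hl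
          show v l * u l = 0
          rw [husupp l hl.1 hl.2, mul_zero])]
      rw [Finset.sum_pair hij]
    have huine : u i ≠ 0 := by
      intro h
      have huj : u j = 0 := by
        rw [h, mul_zero, zero_add] at hdvu
        rcases mul_eq_zero.mp hdvu with h' | h'
        · exact absurd h' (hvne j)
        · exact h'
      apply hune
      funext l
      rcases eq_or_ne l i with rfl | hli
      · exact h
      rcases eq_or_ne l j with rfl | hlj
      · exact huj
      · exact husupp l hli hlj
    set θ := (dotProduct v w) / (dotProduct v v) with hθ
    have hθvv : θ * dotProduct v v = dotProduct v w := div_mul_cancel₀ _ hvv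
    have hMw : M.mulVec (w - θ • v) = u := by
      rw [Matrix.mulVec_sub, Matrix.mulVec_smul, hMmul w, hMmul v, hvC, zero_add]
      rw [smul_smul, hθvv, ← hu]
      exact add_sub_cancel_right u _
    have hGu : G.mulVec u = w - θ • v := by rw [← hMw, hGMvec]
    have hGul : ∀ l, G.mulVec u l = G l i * u i + G l j * u j := by
      intro l
      show ∑ t, G l t * u t = _
      rw [← Finset.sum_subset (Finset.subset_univ ({i, j} : Finset ι))
        (f := fun t => G l t * u t) (fun t _ ht => by
          simp only [Finset.mem_insert, Finset.mem_singleton, not_or] at ht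
          show G l t * u t = 0
          rw [husupp t ht.1 ht.2, mul_zero])]
      rw [Finset.sum_pair hij]
    have eq1 : G i i * u i + G i j * u j = -(θ * v i) := by
      have h11 := congrFun hGu i
      rw [hGul i] at h11
      rw [h11]
      simp [hwi]
    have eq2 : G i j * u i + G j j * u j = -(θ * v j) := by
      have h11 := congrFun hGu j
      rw [hGul j] at h11
      rw [hGsymm j i] at h11
      rw [h11]
      simp [hwj]
    have key : u i * (G i i * v j ^ 2 + G j j * v i ^ 2 - 2 * G i j * (v i * v j)) = 0 := by
      linear_combination (v j ^ 2) * eq1 - (v i * v j) * eq2 - (G i j * v j - G j j * v i) * hdvu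
    rcases mul_eq_zero.mp key with h | h
    · exact absurd h huine
    · exact sub_eq_zero.mp h
  set r : ι → ℝ := fun i => G i i / v i ^ 2 with hr
  have hGentry : ∀ i j, G i j = (r i + r j) * (v i * v j) / 2 := by
    intro i j
    rcases eq_or_ne i j with rfl | hij
    · show G i i = (G i i / v i ^ 2 + G i i / v i ^ 2) * (v i * v i) / 2
      field_simp [hvne i]
      ring
    · have h := hstar i j hij
      show G i j = (G i i / v i ^ 2 + G j j / v j ^ 2) * (v i * v j) / 2
      field_simp [hvne i, hvne j]
      linear_combination (-1 : ℝ) * h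
  set a : ι → ℝ := fun i => r i * v i with ha
  set N : Matrix (Fin 2) ι ℝ := Matrix.of ![a, v] with hN
  have hnotinj : ¬ Function.Injective N.mulVecLin := by
    intro hinj
    have h10 := LinearMap.finrank_le_finrank_of_injective hinj
    rw [Module.finrank_pi, Module.finrank_pi, hcard, Fintype.card_fin] at h10
    omega
  rw [Function.not_injective_iff] at hnotinj
  obtain ⟨x, y, hxy, hne⟩ := hnotinj
  set z : ι → ℝ := x - y with hz
  have hz0 : z ≠ 0 := sub_ne_zero.mpr hne
  have hNz : N.mulVec z = 0 := by
    have : N.mulVecLin z = N.mulVecLin x - N.mulVecLin y := by rw [hz, map_sub]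
    rw [hxy, sub_self] at this
    simpa [Matrix.mulVecLin] using this
  have haz : dotProduct a z = 0 := by
    have := congrFun hNz 0
    simpa [hN, Matrix.mulVec, dotProduct] using this
  have hvz : dotProduct v z = 0 := by
    have := congrFun hNz 1
    simpa [hN, Matrix.mulVec, dotProduct] using this
  have hGz : G.mulVec z = 0 := by
    funext i
    show ∑ j, G i j * z j = (0 : ι → ℝ) i
    have hterm : ∀ j, G i j * z j = (r i * v i / 2) * (v j * z j) + (v i / 2) * (a j * z j) := by
      intro j
      rw [hGentry i j]
      show _ = _ + (v i / 2) * ((r j * v j) * z j)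
      ring
    rw [Finset.sum_congr rfl (fun j _ => hterm j), Finset.sum_add_distrib,
      ← Finset.mul_sum, ← Finset.mul_sum]
    have e1 : ∑ j, v j * z j = 0 := hvz
    have e2 : ∑ j, a j * z j = 0 := haz
    rw [e1, e2]
    simp
  have : z = 0 := by rw [← hMGvec z, hGz, Matrix.mulVec_zero]
  exact hz0 this

lemma pminor_map {ι κ : Type*} [DecidableEq ι] [Fintype ι] [DecidableEq κ] [Fintype κ]
    (B : Matrix κ κ ℝ) (e : ι ↪ κ) (γ : Finset ι) :
    pminor (B.submatrix e e) γ = pminor B (γ.map e) := by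
  have hmem : ∀ a : γ, e a ∈ γ.map e := fun a => Finset.mem_map_of_mem e a.2
  have hsurj : ∀ b : (γ.map e), ∃ a : γ, e a = (b : κ) := by
    intro b
    obtain ⟨a, ha, hab⟩ := Finset.mem_map.mp b.2
    exact ⟨⟨a, ha⟩, hab⟩
  let ψ : γ ≃ (γ.map e) := Equiv.ofBijective (fun a => ⟨e a, hmem a⟩)
    ⟨fun a b hab => Subtype.ext (e.injective (congrArg Subtype.val hab)),
     fun b => by obtain ⟨a, ha⟩ := hsurj b; exact ⟨a, Subtype.ext ha⟩⟩
  unfold pminor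
  rw [← Matrix.det_submatrix_equiv_self ψ
    (B.submatrix (fun i : (γ.map e) => (i : κ)) (fun i : (γ.map e) => (i : κ)))]
  rw [Matrix.submatrix_submatrix, Matrix.submatrix_submatrix]
  rfl


/-- The sequence NAN (with the A term of definite sign) is forbidden over ℝ. -/
theorem forbidden_NAN_real {n : ℕ} (B : Matrix (Fin n) (Fin n) ℝ) (hB : B.IsSymm)
    (k : ℕ) (hk1 : 1 ≤ k) (hkn : k ≤ n - 2)
    (hN : ∀ α : Finset (Fin n), α.card = k → pminor B α = 0)
    (hA : (∀ α : Finset (Fin n), α.card = k + 1 → 0 < pminor B α) ∨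
          (∀ α : Finset (Fin n), α.card = k + 1 → pminor B α < 0))
    (hN' : ∀ α : Finset (Fin n), α.card = k + 2 → pminor B α = 0) :
    False := by
  have hn : k + 2 ≤ n := by omega
  have hcard : k + 2 ≤ (Finset.univ : Finset (Fin n)).card := by
    rw [Finset.card_univ, Fintype.card_fin]; exact hn
  obtain ⟨α₀, -, hα₀⟩ := Finset.exists_subset_card_eq hcard
  let e : ↥α₀ ↪ Fin n := Function.Embedding.subtype _
  have hcardι : Fintype.card ↥α₀ = k + 2 := by rw [Fintype.card_coe, hα₀]
  apply core k hk1 hcardι (B.submatrix e e) ?_ ?_ ?_ ?_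
  · show (B.submatrix e e)ᵀ = B.submatrix e e
    rw [Matrix.transpose_submatrix, hB.eq]
  · intro γ hγ
    rw [pminor_map]
    exact hN _ (by rw [Finset.card_map, hγ])
  · rcases hA with h | h
    · intro γ hγ
      rw [pminor_map]
      exact ne_of_gt (h _ (by rw [Finset.card_map, hγ]))
    · intro γ hγ
      rw [pminor_map]
      exact ne_of_lt (h _ (by rw [Finset.card_map, hγ]))
  · exact hN' α₀ hα₀
end

section
/- The 5×5 skew-pattern Hermitian matrix C with zero diagonal and (j,k) entry equal to i for j < k and −i for j > k (where i is the imaginary unit) satisfies: all order-1 and order-3 and order-5 principal minors are zero, all order-2 principal minors are negative, and all order-4 principal minors are positive. (Its sepr-sequence is NA⁻NA⁺N.) -/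
open ComplexOrder

/-- The k×k pattern matrix: zero diagonal, `I` above, `-I` below. -/
noncomputable def patM (k : ℕ) : Matrix (Fin k) (Fin k) ℂ :=
  Matrix.of fun j l : Fin k => if j < l then Complex.I else if l < j then -Complex.I else 0

lemma pminor_eq_patM {k : ℕ} (C : Matrix (Fin 5) (Fin 5) ℂ)
    (hC : ∀ j l : Fin 5, C j l = if j < l then Complex.I else if l < j then -Complex.I else 0)
    (α : Finset (Fin 5)) (h : α.card = k) :
    pminor C α = (patM k).det := by
  rw [pminor, ← Matrix.det_submatrix_equiv_self (α.orderIsoOfFin h).toEquiv]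
  congr 1
  ext j l
  have hf : StrictMono (α.orderEmbOfFin h) := (α.orderEmbOfFin h).strictMono
  simp only [Matrix.submatrix_apply, patM, Matrix.of_apply]
  have : ∀ i : Fin k, (((α.orderIsoOfFin h).toEquiv i : Fin 5)) = α.orderEmbOfFin h i :=
    fun i => rfl
  rw [this, this, hC]
  rcases lt_trichotomy j l with hjl | hjl | hjl
  · simp [hf hjl, (hf hjl).not_gt, hjl, hjl.not_gt]
  · simp [hjl]
  · simp [hf hjl, (hf hjl).not_gt, hjl, hjl.not_gt]

lemma patM_det_one : (patM 1).det = 0 := by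
  norm_num [patM, Matrix.det_fin_one]

set_option maxRecDepth 10000 in
lemma patM_det_two : (patM 2).det = -1 := by
  have h : patM 2 = !![0,Complex.I; -Complex.I,0] := by
    ext i j
    fin_cases i <;> fin_cases j <;> rfl
  rw [h]
  simp only [Matrix.det_succ_row_zero, Fin.sum_univ_succ, Fin.sum_univ_zero, Matrix.det_fin_zero,
    Matrix.submatrix_apply, Fin.succ_succAbove_zero, Fin.succ_succAbove_succ, Fin.zero_succAbove,
    Matrix.of_apply, Matrix.cons_val_zero, Matrix.cons_val_succ, Fin.val_zero, Fin.val_succ,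
    pow_zero, pow_succ]
  ring_nf; norm_num

set_option maxRecDepth 20000 in
lemma patM_det_three : (patM 3).det = 0 := by
  have h : patM 3 = !![0,Complex.I,Complex.I; -Complex.I,0,Complex.I; -Complex.I,-Complex.I,0] := by
    ext i j
    fin_cases i <;> fin_cases j <;> rfl
  rw [h]
  simp only [Matrix.det_succ_row_zero, Fin.sum_univ_succ, Fin.sum_univ_zero, Matrix.det_fin_zero,
    Matrix.submatrix_apply, Fin.succ_succAbove_zero, Fin.succ_succAbove_succ, Fin.zero_succAbove,
    Matrix.of_apply, Matrix.cons_val_zero, Matrix.cons_val_succ, Fin.val_zero, Fin.val_succ,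
    pow_zero, pow_succ]
  ring_nf

set_option maxRecDepth 40000 in
lemma patM_det_four : (patM 4).det = 1 := by
  have h : patM 4 = !![0,Complex.I,Complex.I,Complex.I; -Complex.I,0,Complex.I,Complex.I; -Complex.I,-Complex.I,0,Complex.I; -Complex.I,-Complex.I,-Complex.I,0] := by
    ext i j
    fin_cases i <;> fin_cases j <;> rfl
  rw [h]
  simp only [Matrix.det_succ_row_zero, Fin.sum_univ_succ, Fin.sum_univ_zero, Matrix.det_fin_zero,
    Matrix.submatrix_apply, Fin.succ_succAbove_zero, Fin.succ_succAbove_succ, Fin.zero_succAbove,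
    Matrix.of_apply, Matrix.cons_val_zero, Matrix.cons_val_succ, Fin.val_zero, Fin.val_succ,
    pow_zero, pow_succ]
  ring_nf; norm_num

set_option maxRecDepth 80000 in
lemma patM_det_five : (patM 5).det = 0 := by
  have h : patM 5 = !![0,Complex.I,Complex.I,Complex.I,Complex.I; -Complex.I,0,Complex.I,Complex.I,Complex.I; -Complex.I,-Complex.I,0,Complex.I,Complex.I; -Complex.I,-Complex.I,-Complex.I,0,Complex.I; -Complex.I,-Complex.I,-Complex.I,-Complex.I,0] := by
    ext i j
    fin_cases i <;> fin_cases j <;> rfl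
  rw [h]
  simp only [Matrix.det_succ_row_zero, Fin.sum_univ_succ, Fin.sum_univ_zero, Matrix.det_fin_zero,
    Matrix.submatrix_apply, Fin.succ_succAbove_zero, Fin.succ_succAbove_succ, Fin.zero_succAbove,
    Matrix.of_apply, Matrix.cons_val_zero, Matrix.cons_val_succ, Fin.val_zero, Fin.val_succ,
    pow_zero, pow_succ]
  ring_nf

/-- The 5×5 Hermitian matrix with zero diagonal, `i` above the diagonal and `-i` below it,
has sepr-sequence NA⁻NA⁺N. -/
theorem sepr_NAminusNAplusN :
    ∀ C : Matrix (Fin 5) (Fin 5) ℂ,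
      (∀ j k : Fin 5, C j k = if j < k then Complex.I else if k < j then -Complex.I else 0) →
      ((∀ α : Finset (Fin 5), α.card = 1 → pminor C α = 0) ∧
       (∀ α : Finset (Fin 5), α.card = 2 → pminor C α < 0) ∧
       (∀ α : Finset (Fin 5), α.card = 3 → pminor C α = 0) ∧
       (∀ α : Finset (Fin 5), α.card = 4 → 0 < pminor C α) ∧
       (∀ α : Finset (Fin 5), α.card = 5 → pminor C α = 0)) := by
  intro C hC
  refine ⟨fun α hα => ?_, fun α hα => ?_, fun α hα => ?_, fun α hα => ?_, fun α hα => ?_⟩ <;>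
    rw [pminor_eq_patM C hC α hα]
  · rw [patM_det_one]
  · rw [patM_det_two, Complex.lt_def]; norm_num
  · rw [patM_det_three]
  · rw [patM_det_four, Complex.lt_def]; norm_num
  · rw [patM_det_five]
end

section
/- The 4×4 real diagonal matrix B = diag(1, −1, −1, 0) satisfies: among its order-1 principal minors there is a positive one, a negative one, and a zero one; among its order-2 principal minors there is a positive one, a negative one, and a zero one; its order-3 principal minors are all nonnegative with at least one zero and at least one positive; and its order-4 principal minor (the determinant) is zero. (Its sepr-sequence is S*S*S⁺N.) -/
open ComplexOrder

lemma pminor_diagonal {m : Type*} [DecidableEq m] [Fintype m] {R : Type*} [CommRing R]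
    (d : m → R) (α : Finset m) :
    pminor (Matrix.diagonal d) α = ∏ i ∈ α, d i := by
  rw [pminor, Matrix.submatrix_diagonal _ _ Subtype.coe_injective, Matrix.det_diagonal]
  exact Finset.prod_attach α fun i => d i

/-- The diagonal matrix `diag (1, -1, -1, 0)` has sepr-sequence S*S*S⁺N. -/
theorem sepr_SstarSstarSplusN :
    ∀ B : Matrix (Fin 4) (Fin 4) ℝ, B = Matrix.diagonal ![1, -1, -1, 0] →
      ((∃ α : Finset (Fin 4), α.card = 1 ∧ 0 < pminor B α) ∧
       (∃ α : Finset (Fin 4), α.card = 1 ∧ pminor B α < 0) ∧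
       (∃ α : Finset (Fin 4), α.card = 1 ∧ pminor B α = 0) ∧
       (∃ α : Finset (Fin 4), α.card = 2 ∧ 0 < pminor B α) ∧
       (∃ α : Finset (Fin 4), α.card = 2 ∧ pminor B α < 0) ∧
       (∃ α : Finset (Fin 4), α.card = 2 ∧ pminor B α = 0) ∧
       (∀ α : Finset (Fin 4), α.card = 3 → 0 ≤ pminor B α) ∧
       (∃ α : Finset (Fin 4), α.card = 3 ∧ pminor B α = 0) ∧
       (∃ α : Finset (Fin 4), α.card = 3 ∧ 0 < pminor B α) ∧
       (∀ α : Finset (Fin 4), α.card = 4 → pminor B α = 0)) := by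
  intro B hB
  subst hB
  simp only [pminor_diagonal]
  refine ⟨⟨{0}, rfl, by norm_num⟩,
          ⟨{1}, rfl, by norm_num⟩,
          ⟨{3}, rfl, by norm_num [Matrix.cons_val_three]⟩,
          ⟨{1, 2}, rfl, by rw [Finset.prod_pair (by decide)]; norm_num [Matrix.cons_val_two]⟩,
          ⟨{0, 1}, rfl, by norm_num [Finset.prod_insert]⟩,
          ⟨{0, 3}, rfl, by rw [Finset.prod_pair (by decide)]; norm_num [Matrix.cons_val_three]⟩,
          ?_,
          ⟨{0, 1, 3}, rfl, by rw [show ({0,1,3}:Finset (Fin 4)) = {0,1,3} from rfl, Finset.prod_insert (by decide), Finset.prod_pair (by decide)]; norm_num [Matrix.cons_val_three]⟩,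
          ⟨{0, 1, 2}, rfl, by rw [Finset.prod_insert (by decide), Finset.prod_pair (by decide)]; norm_num [Matrix.cons_val_two]⟩,
          ?_⟩
  · intro α hα
    have h : α ∈ Finset.univ.powersetCard 3 := by
      simp [Finset.mem_powersetCard, hα]
    fin_cases h <;>
      · show (0:ℝ) ≤ Multiset.prod (Multiset.map _ _); norm_num
  · intro α hα
    have h : α = Finset.univ := Finset.eq_univ_of_card α hα
    subst h
    norm_num [Fin.prod_univ_four, Matrix.cons_val_three]
end
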